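/- Optimality of the Riccati-based Gramian for the LQR SDP: let A be n×n, B be n×m, Q symmetric n×n, R symmetric positive definite m×m, x_0 ∈ ℝⁿ. Suppose the symmetric matrix P̂ satisfies AᵀP̂ + P̂A + Q − P̂BR⁻¹BᵀP̂ = 0 with K̂ = −R⁻¹BᵀP̂, and Z₁₁ ⪰ 0 satisfies x_0x_0ᵀ + (A+BK̂)Z₁₁ + Z₁₁(A+BK̂)ᵀ = 0. Then Ẑ = [I; K̂] Z₁₁ [I; K̂]ᵀ is positive semidefinite, its blocks satisfy x_0x_0ᵀ + AẐ₁₁ + BẐ₁₂ᵀ + Ẑ₁₁Aᵀ + Ẑ₁₂Bᵀ = 0, Tr(Q Ẑ₁₁) + Tr(R Ẑ₂₂) = x_0ᵀP̂x_0, and every positive semidefinite Z satisfying x_0x_0ᵀ + AZ₁₁ + BZ₁₂ᵀ + Z₁₁Aᵀ + Z₁₂Bᵀ = 0 has Tr(Q Z₁₁) + Tr(R Z₂₂) ≥ x_0ᵀP̂x_0. -/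

import Mathlib

open Matrix

lemma psd_trace_nonneg {k : Type*} [Fintype k] [DecidableEq k]
    {M : Matrix k k ℝ} (hM : M.PosSemidef) : 0 ≤ M.trace := by
  rw [Matrix.trace]
  refine Finset.sum_nonneg fun i _ => ?_
  have h := hM.dotProduct_mulVec_nonneg (Pi.single i 1)
  simpa [Matrix.mulVec, dotProduct, Pi.single_apply] using h

open scoped MatrixOrder in
lemma psd_trace_mul_nonneg {k : Type*} [Fintype k] [DecidableEq k]
    {R M : Matrix k k ℝ} (hR : R.PosDef) (hM : M.PosSemidef) :
    0 ≤ (R * M).trace := by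
  have hs := hR.posSemidef
  have hsym : (CFC.sqrt R)ᴴ = CFC.sqrt R := (CFC.sqrt_nonneg R).posSemidef.isHermitian
  have h2 : (CFC.sqrt R * M * (CFC.sqrt R)ᴴ).PosSemidef := hM.mul_mul_conjTranspose_same _
  rw [hsym] at h2
  have hRM : R * M = CFC.sqrt R * (CFC.sqrt R * M) := by
    rw [← Matrix.mul_assoc, CFC.sqrt_mul_sqrt_self R hs.nonneg]
  rw [hRM, Matrix.trace_mul_comm]
  exact psd_trace_nonneg h2

lemma trace_mul_vecMulVec {k : Type*} [Fintype k]
    (P : Matrix k k ℝ) (x y : k → ℝ) :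
    (P * vecMulVec x y).trace = y ⬝ᵥ P *ᵥ x := by
  simp only [Matrix.trace, Matrix.diag, Matrix.mul_apply, vecMulVec_apply, dotProduct,
    Matrix.mulVec, Finset.mul_sum]
  exact Finset.sum_congr rfl fun i _ => Finset.sum_congr rfl fun j _ => by ring

lemma tr_conj {k l : Type*} [Fintype k] [Fintype l]
    (R : Matrix k k ℝ) (K : Matrix k l ℝ) (X : Matrix l l ℝ) :
    (R * (K * X * Kᵀ)).trace = ((Kᵀ * R * K) * X).trace := by
  have h1 : R * (K * X * Kᵀ) = R * (K * X) * Kᵀ := by simp [Matrix.mul_assoc]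
  rw [h1, Matrix.trace_mul_cycle]
  congr 1
  simp [Matrix.mul_assoc]

lemma tr_swap_symm {k l : Type*} [Fintype k] [Fintype l]
    {R : Matrix k k ℝ} (hRsymm : Rᵀ = R) (K : Matrix k l ℝ) (Y : Matrix l k ℝ) :
    (R * (Yᵀ * Kᵀ)).trace = (R * (K * Y)).trace := by
  rw [show Yᵀ * Kᵀ = (K * Y)ᵀ from (Matrix.transpose_mul K Y).symm]
  calc (R * (K * Y)ᵀ).trace = ((R * (K * Y)ᵀ)ᵀ).trace := (Matrix.trace_transpose _).symm
    _ = ((K * Y)ᵀᵀ * Rᵀ).trace := by rw [Matrix.transpose_mul]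
    _ = ((K * Y) * R).trace := by rw [Matrix.transpose_transpose, hRsymm]
    _ = (R * (K * Y)).trace := Matrix.trace_mul_comm _ _

lemma tr_cyc_right {k l : Type*} [Fintype k] [Fintype l]
    (P : Matrix k k ℝ) (X : Matrix k l ℝ) (C : Matrix l k ℝ) :
    (P * (X * C)).trace = ((C * P) * X).trace := by
  rw [← Matrix.mul_assoc, Matrix.trace_mul_cycle]

/-- Optimality of the Riccati-based Gramian for the LQR SDP. -/
theorem lqr_riccati_gramian_optimal {n m : ℕ}
    (A : Matrix (Fin n) (Fin n) ℝ) (B : Matrix (Fin n) (Fin m) ℝ)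
    (Q : Matrix (Fin n) (Fin n) ℝ) (hQ : Q.IsSymm)
    (R : Matrix (Fin m) (Fin m) ℝ) (hR : R.PosDef) (hRsymm : R.IsSymm)
    (x0 : Fin n → ℝ)
    (P : Matrix (Fin n) (Fin n) ℝ) (hP : P.IsSymm)
    (hARE : Aᵀ * P + P * A + Q - P * B * R⁻¹ * Bᵀ * P = 0)
    (Z₁₁ : Matrix (Fin n) (Fin n) ℝ) (hZ₁₁ : Z₁₁.PosSemidef)
    (hLyap : vecMulVec x0 x0 + (A + B * (-(R⁻¹ * Bᵀ * P))) * Z₁₁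
      + Z₁₁ * (A + B * (-(R⁻¹ * Bᵀ * P)))ᵀ = 0) :
    (let K := -(R⁻¹ * Bᵀ * P)
     let S : Matrix (Fin n ⊕ Fin m) (Fin n) ℝ :=
       fromRows (1 : Matrix (Fin n) (Fin n) ℝ) K
     let Zh := S * Z₁₁ * Sᵀ
     Zh.PosSemidef ∧
       (vecMulVec x0 x0 + A * Zh.toBlocks₁₁ + B * (Zh.toBlocks₁₂)ᵀ
         + Zh.toBlocks₁₁ * Aᵀ + Zh.toBlocks₁₂ * Bᵀ = 0) ∧
       ((Q * Zh.toBlocks₁₁).trace + (R * Zh.toBlocks₂₂).trace = x0 ⬝ᵥ P *ᵥ x0) ∧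
       (∀ (W₁₁ : Matrix (Fin n) (Fin n) ℝ) (W₁₂ : Matrix (Fin n) (Fin m) ℝ)
          (W₂₂ : Matrix (Fin m) (Fin m) ℝ),
          (fromBlocks W₁₁ W₁₂ W₁₂ᵀ W₂₂).PosSemidef →
          vecMulVec x0 x0 + A * W₁₁ + B * W₁₂ᵀ + W₁₁ * Aᵀ + W₁₂ * Bᵀ = 0 →
          x0 ⬝ᵥ P *ᵥ x0 ≤ (Q * W₁₁).trace + (R * W₂₂).trace)) := by
  have hdet : IsUnit R.det := (Matrix.isUnit_iff_isUnit_det R).mp hR.isUnit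
  set K : Matrix (Fin m) (Fin n) ℝ := -(R⁻¹ * Bᵀ * P) with hKdef
  set S : Matrix (Fin n ⊕ Fin m) (Fin n) ℝ := fromRows (1 : Matrix (Fin n) (Fin n) ℝ) K with hSdef
  -- basic symmetry facts
  have hZT : Z₁₁ᵀ = Z₁₁ := by
    rw [← Matrix.conjTranspose_eq_transpose_of_trivial]; exact hZ₁₁.isHermitian
  have hRiT : R⁻¹ᵀ = R⁻¹ := by rw [Matrix.transpose_nonsing_inv, hRsymm.eq]
  have hKT : Kᵀ = -(P * B * R⁻¹) := by
    rw [hKdef]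
    simp [Matrix.transpose_mul, hRiT, hP.eq, Matrix.mul_assoc]
  have hBtP : Bᵀ * P = -(R * K) := by
    rw [hKdef, Matrix.mul_neg, Matrix.mul_assoc R⁻¹, ← Matrix.mul_assoc R,
      Matrix.mul_nonsing_inv _ hdet, Matrix.one_mul, neg_neg]
  have hPB : P * B = -(Kᵀ * R) := by
    rw [hKT, Matrix.neg_mul, Matrix.mul_assoc, Matrix.nonsing_inv_mul _ hdet,
      Matrix.mul_one, neg_neg]
  have hKtR : Kᵀ * R = -(P * B) := by rw [hPB, neg_neg]
  have hKRK : Kᵀ * R * K = P * B * R⁻¹ * Bᵀ * P := by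
    rw [hKtR, hKdef]
    simp [Matrix.mul_assoc]
  have hARE2 : Aᵀ * P + P * A + Q - Kᵀ * R * K = 0 := by rw [hKRK]; exact hARE
  -- useful scalar consequences of the Lyapunov equation and ARE
  have e1 : P * (B * K) = -(Kᵀ * R * K) := by
    rw [← Matrix.mul_assoc, hPB, Matrix.neg_mul]
  have e2 : Kᵀ * Bᵀ * P = -(Kᵀ * R * K) := by
    rw [Matrix.mul_assoc, hBtP, Matrix.mul_neg, Matrix.mul_assoc]
  -- block structure of Zh
  have hS : S * Z₁₁ * Sᵀ = fromBlocks Z₁₁ (Z₁₁ * Kᵀ) (K * Z₁₁) (K * Z₁₁ * Kᵀ) := by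
    rw [hSdef, Matrix.transpose_fromRows, Matrix.fromRows_mul, Matrix.fromRows_mul_fromCols]
    simp [Matrix.transpose_one]
  refine ⟨?_, ?_, ?_, ?_⟩
  · -- positive semidefiniteness
    rw [show Sᵀ = Sᴴ from (Matrix.conjTranspose_eq_transpose_of_trivial S).symm]
    exact hZ₁₁.mul_mul_conjTranspose_same S
  · -- feasibility of the blocks
    rw [hS]
    simp only [Matrix.toBlocks_fromBlocks₁₁, Matrix.toBlocks_fromBlocks₁₂]
    simp only [Matrix.transpose_mul, Matrix.transpose_transpose, hZT]
    simp only [Matrix.add_mul, Matrix.mul_add, Matrix.transpose_add, Matrix.transpose_mul,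
      Matrix.mul_assoc] at hLyap ⊢
    rw [← hLyap]; abel
  · -- the value of the objective
    rw [hS]
    simp only [Matrix.toBlocks_fromBlocks₁₁, Matrix.toBlocks_fromBlocks₂₂]
    have ta : (R * (K * Z₁₁ * Kᵀ)).trace = ((Kᵀ * R * K) * Z₁₁).trace := tr_conj R K Z₁₁
    have tb : x0 ⬝ᵥ P *ᵥ x0 = (P * vecMulVec x0 x0).trace := (trace_mul_vecMulVec P x0 x0).symm
    have hvr : vecMulVec x0 x0 = -((A + B * K) * Z₁₁ + Z₁₁ * (A + B * K)ᵀ) := by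
      apply eq_neg_of_add_eq_zero_left
      rw [← hLyap]; abel
    have tc : (P * vecMulVec x0 x0).trace
        = -((P * ((A + B * K) * Z₁₁)).trace + (P * (Z₁₁ * (A + B * K)ᵀ)).trace) := by
      rw [hvr]
      simp [Matrix.mul_add, Matrix.trace_add]
    have td : (P * ((A + B * K) * Z₁₁)).trace
        = ((P * A) * Z₁₁).trace - ((Kᵀ * R * K) * Z₁₁).trace := by
      rw [Matrix.add_mul, Matrix.mul_add, Matrix.trace_add, ← Matrix.mul_assoc,
        ← Matrix.mul_assoc, e1]
      simp [sub_eq_add_neg, Matrix.neg_mul, Matrix.trace_neg]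
    have te : (P * (Z₁₁ * (A + B * K)ᵀ)).trace
        = ((Aᵀ * P) * Z₁₁).trace - ((Kᵀ * R * K) * Z₁₁).trace := by
      rw [tr_cyc_right]
      rw [Matrix.transpose_add, Matrix.transpose_mul, Matrix.add_mul, Matrix.add_mul,
        Matrix.trace_add, e2]
      simp [sub_eq_add_neg, Matrix.neg_mul, Matrix.trace_neg]
    have tf : ((Aᵀ * P) * Z₁₁).trace + ((P * A) * Z₁₁).trace + (Q * Z₁₁).trace
        - ((Kᵀ * R * K) * Z₁₁).trace = 0 := by
      have := congrArg (fun M => (M * Z₁₁).trace) hARE2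
      simpa [Matrix.add_mul, Matrix.sub_mul, Matrix.trace_add, Matrix.trace_sub] using this
    linarith [ta, tb, tc, td, te, tf]
  · -- optimality
    intro W₁₁ W₁₂ W₂₂ hW hfeas
    set L : Matrix (Fin m) (Fin n ⊕ Fin m) ℝ := fromCols (-K) 1 with hLdef
    have hM : L * fromBlocks W₁₁ W₁₂ W₁₂ᵀ W₂₂ * Lᵀ
        = K * W₁₁ * Kᵀ - W₁₂ᵀ * Kᵀ - K * W₁₂ + W₂₂ := by
      rw [hLdef, Matrix.transpose_fromCols, Matrix.fromCols_mul_fromBlocks,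
        Matrix.fromCols_mul_fromRows]
      simp only [Matrix.transpose_one, Matrix.neg_mul, Matrix.mul_neg, Matrix.one_mul, Matrix.mul_one,
        Matrix.transpose_neg, Matrix.add_mul, neg_neg, neg_add]
      abel
    have hMpsd : (K * W₁₁ * Kᵀ - W₁₂ᵀ * Kᵀ - K * W₁₂ + W₂₂).PosSemidef := by
      rw [← hM, show Lᵀ = Lᴴ from (Matrix.conjTranspose_eq_transpose_of_trivial L).symm]
      exact hW.mul_mul_conjTranspose_same L
    have hnn : 0 ≤ (R * (K * W₁₁ * Kᵀ - W₁₂ᵀ * Kᵀ - K * W₁₂ + W₂₂)).trace :=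
      psd_trace_mul_nonneg hR hMpsd
    have b0 : (R * (K * W₁₁ * Kᵀ - W₁₂ᵀ * Kᵀ - K * W₁₂ + W₂₂)).trace
        = (R * (K * W₁₁ * Kᵀ)).trace - (R * (W₁₂ᵀ * Kᵀ)).trace
          - (R * (K * W₁₂)).trace + (R * W₂₂).trace := by
      simp [Matrix.mul_add, Matrix.mul_sub, Matrix.trace_add, Matrix.trace_sub]
    have b1 : (R * (K * W₁₁ * Kᵀ)).trace = ((Kᵀ * R * K) * W₁₁).trace := tr_conj R K W₁₁
    have b2 : (R * (W₁₂ᵀ * Kᵀ)).trace = (R * (K * W₁₂)).trace := tr_swap_symm hRsymm.eq K W₁₂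
    have c0 : (P * vecMulVec x0 x0).trace = x0 ⬝ᵥ P *ᵥ x0 := trace_mul_vecMulVec P x0 x0
    have hv : vecMulVec x0 x0 = -(A * W₁₁ + B * W₁₂ᵀ + W₁₁ * Aᵀ + W₁₂ * Bᵀ) := by
      apply eq_neg_of_add_eq_zero_left
      rw [← hfeas]; abel
    have c1 : (P * vecMulVec x0 x0).trace
        = -((P * (A * W₁₁)).trace + (P * (B * W₁₂ᵀ)).trace
          + (P * (W₁₁ * Aᵀ)).trace + (P * (W₁₂ * Bᵀ)).trace) := by
      rw [hv]
      simp [Matrix.mul_add, Matrix.trace_add]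
    have c2 : (P * (A * W₁₁)).trace = ((P * A) * W₁₁).trace := by rw [Matrix.mul_assoc]
    have c3 : (P * (W₁₁ * Aᵀ)).trace = ((Aᵀ * P) * W₁₁).trace := tr_cyc_right P W₁₁ Aᵀ
    have c4 : (P * (B * W₁₂ᵀ)).trace = -(R * (K * W₁₂)).trace := by
      rw [← Matrix.mul_assoc, hPB, Matrix.neg_mul, Matrix.trace_neg, neg_inj,
        Matrix.mul_assoc, Matrix.trace_mul_comm, Matrix.mul_assoc]
      exact tr_swap_symm hRsymm.eq K W₁₂
    have c5 : (P * (W₁₂ * Bᵀ)).trace = -(R * (K * W₁₂)).trace := by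
      rw [tr_cyc_right P W₁₂ Bᵀ, hBtP, Matrix.neg_mul, Matrix.trace_neg, neg_inj,
        Matrix.mul_assoc]
    have c6 : ((Aᵀ * P) * W₁₁).trace + ((P * A) * W₁₁).trace + (Q * W₁₁).trace
        - ((Kᵀ * R * K) * W₁₁).trace = 0 := by
      have := congrArg (fun M => (M * W₁₁).trace) hARE2
      simpa [Matrix.add_mul, Matrix.sub_mul, Matrix.trace_add, Matrix.trace_sub] using this
    linarith [hnn, b0, b1, b2, c0, c1, c2, c3, c4, c5, c6]
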